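/- Let ε > 0 and Δ > 0, and let Lap(Δ/ε) denote the Borel measure on ℝ with density x ↦ (ε/(2Δ))·exp(−ε·|x|/Δ) with respect to Lebesgue measure. Then for all reals a₁, a₂ with |a₁ − a₂| ≤ Δ and every measurable set E ⊆ ℝ, Lap(Δ/ε){η | a₁ + η ∈ E} ≤ exp(ε) · Lap(Δ/ε){η | a₂ + η ∈ E}. That is, the Laplace mechanism with noise scale Δ/ε is ε-differentially private for queries of sensitivity Δ. -/
import Mathlib


open MeasureTheory
open scoped ENNReal

/-- The Laplace mechanism with noise scale `Δ/ε` is `ε`-differentially private for queries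
of sensitivity `Δ`. -/
theorem laplace_mechanism_dp (ε Δ : ℝ) (hε : 0 < ε) (hΔ : 0 < Δ)
    (Lap : Measure ℝ)
    (hLap : Lap = volume.withDensity
      (fun x => ENNReal.ofReal ((ε / (2 * Δ)) * Real.exp (-(ε * |x|) / Δ))))
    (a₁ a₂ : ℝ) (hadj : |a₁ - a₂| ≤ Δ) (E : Set ℝ) (hE : MeasurableSet E) :
    Lap {η | a₁ + η ∈ E} ≤ ENNReal.ofReal (Real.exp ε) * Lap {η | a₂ + η ∈ E} := by
  subst hLap
  set d : ℝ → ℝ≥0∞ := fun x => ENNReal.ofReal ((ε / (2 * Δ)) * Real.exp (-(ε * |x|) / Δ))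
    with hd
  have hdm : Measurable d := by
    apply Measurable.ennreal_ofReal
    fun_prop
  have key : ∀ a : ℝ, (volume.withDensity d) {η | a + η ∈ E}
      = ∫⁻ y, E.indicator (fun y => d (y - a)) y := by
    intro a
    have hSm : MeasurableSet {η : ℝ | a + η ∈ E} := hE.preimage (by fun_prop)
    rw [withDensity_apply _ hSm, ← lintegral_indicator hSm d]
    rw [← lintegral_sub_right_eq_self (fun x => {η : ℝ | a + η ∈ E}.indicator d x) a]
    congr 1
    ext y
    by_cases hy : y ∈ E
    · have : y - a ∈ {η : ℝ | a + η ∈ E} := by simp [hy]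
      simp [Set.indicator_of_mem, hy, this]
    · have : y - a ∉ {η : ℝ | a + η ∈ E} := by simp [hy]
      simp [Set.indicator_of_notMem, hy, this]
  rw [key a₁, key a₂]
  rw [← lintegral_const_mul _ (by
    exact (Measurable.indicator (by fun_prop) hE : Measurable
      (E.indicator (fun y => d (y - a₂)))))]
  apply lintegral_mono
  intro y
  by_cases hy : y ∈ E
  · simp only [Set.indicator_of_mem hy, hd]
    rw [← ENNReal.ofReal_mul (Real.exp_nonneg _)]
    apply ENNReal.ofReal_le_ofReal
    rw [show Real.exp ε * (ε / (2 * Δ) * Real.exp (-(ε * |y - a₂|) / Δ))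
        = ε / (2 * Δ) * (Real.exp ε * Real.exp (-(ε * |y - a₂|) / Δ)) by ring]
    apply mul_le_mul_of_nonneg_left _ (by positivity)
    rw [← Real.exp_add]
    apply Real.exp_le_exp.mpr
    have htri : |y - a₂| ≤ |y - a₁| + |a₁ - a₂| := by
      have := abs_sub_le y a₁ a₂
      simpa using this
    rw [div_le_iff₀ hΔ, add_mul, div_mul_cancel₀ _ hΔ.ne']
    nlinarith [abs_nonneg (y - a₁), abs_nonneg (y - a₂)]
  · simp [Set.indicator_of_notMem hy]
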